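/- (Uniqueness of the angle bisector) Let p, q, r be noncollinear points of the Euclidean plane, and let a ≠ q and b ≠ q be points with ∠ p q a = ∠ a q r and ∠ p q a + ∠ a q r = ∠ p q r, and ∠ p q b = ∠ b q r and ∠ p q b + ∠ b q r = ∠ p q r. Then a and b lie on the same ray from q, i.e., SameRay ℝ (a − q) (b − q). -/

import Mathlib

open EuclideanGeometry Real

theorem angle_bisector_unique (p q r a b : EuclideanSpace ℝ (Fin 2))
    (hncol : ¬ Collinear ℝ ({p, q, r} : Set (EuclideanSpace ℝ (Fin 2))))
    (ha : a ≠ q) (hb : b ≠ q)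
    (ha1 : ∠ p q a = ∠ a q r) (ha2 : ∠ p q a + ∠ a q r = ∠ p q r)
    (hb1 : ∠ p q b = ∠ b q r) (hb2 : ∠ p q b + ∠ b q r = ∠ p q r) :
    SameRay ℝ (a - q) (b - q) := by
  haveI : Fact (Module.finrank ℝ (EuclideanSpace ℝ (Fin 2)) = 2) :=
    ⟨finrank_euclideanSpace_fin⟩
  haveI : Module.Oriented ℝ (EuclideanSpace ℝ (Fin 2)) (Fin 2) :=
    ⟨Module.Basis.orientation (EuclideanSpace.basisFun (Fin 2) ℝ).toBasis⟩
  have hpq : p ≠ q := by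
    rintro rfl
    exact hncol (by simpa using collinear_pair ℝ p r)
  have hrq : r ≠ q := by
    rintro rfl
    exact hncol (by simpa using collinear_pair ℝ p r)
  have hne0 : ∠ p q r ≠ 0 := angle_ne_zero_of_not_collinear hncol
  have hnepi : ∠ p q r ≠ π := angle_ne_pi_of_not_collinear hncol
  have hlt : ∠ p q r < π := lt_of_le_of_ne (angle_le_pi _ _ _) hnepi
  have hpos : 0 < ∠ p q r := angle_pos_of_not_collinear hncol
  have h2a : 2 * ∠ p q a = ∠ p q r := by linarith [ha1, ha2]
  set s := ∠ p q a with hs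
  have hspos : 0 < s := by linarith
  have hslt : s < π / 2 := by linarith
  have hts : ∠ p q b = s := by nlinarith [hb1, hb2]
  have hoa : ∡ p q a + ∡ a q r = ∡ p q r := oangle_add hpq ha hrq
  have hob : ∡ p q b + ∡ b q r = ∡ p q r := oangle_add hpq hb hrq
  have h2s : ((2 * s : ℝ) : Real.Angle) ≠ ((-(2 * s) : ℝ) : Real.Angle) := by
    intro h
    have h1 : ((2*s : ℝ) : Real.Angle).toReal = 2*s :=
      Real.Angle.toReal_coe_eq_self_iff.2 ⟨by linarith [Real.pi_pos], by linarith⟩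
    have h2 : ((-(2*s) : ℝ) : Real.Angle).toReal = -(2*s) :=
      Real.Angle.toReal_coe_eq_self_iff.2 ⟨by linarith, by linarith [Real.pi_pos]⟩
    rw [h, h2] at h1
    linarith
  have key : ∀ x : EuclideanSpace ℝ (Fin 2), x ≠ q → ∠ p q x = s → ∠ x q r = s →
      (∡ p q x + ∡ x q r = ∡ p q r) →
      (∡ p q x = (s : Real.Angle) ∧ ∡ p q r = ((2*s : ℝ) : Real.Angle)) ∨
      (∡ p q x = ((-s : ℝ) : Real.Angle) ∧ ∡ p q r = ((-(2*s) : ℝ) : Real.Angle)) := by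
    intro x hx h1 h2 hsum
    rcases oangle_eq_angle_or_eq_neg_angle hpq hx with hA | hA <;>
      rw [h1] at hA <;>
      rcases oangle_eq_angle_or_eq_neg_angle hx hrq with hB | hB <;>
      rw [h2] at hB
    · left
      refine ⟨hA, ?_⟩
      rw [← hsum, hA, hB, ← Real.Angle.coe_add]
      congr 1
      ring
    · exfalso
      rw [hA, hB, ← Real.Angle.coe_neg, ← Real.Angle.coe_add] at hsum
      simp only [add_neg_cancel, Real.Angle.coe_zero] at hsum
      exact hne0 ((angle_eq_abs_oangle_toReal hpq hrq).trans (by rw [← hsum]; simp))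
    · exfalso
      rw [hA, hB, ← Real.Angle.coe_neg, ← Real.Angle.coe_add] at hsum
      simp only [neg_add_cancel, Real.Angle.coe_zero] at hsum
      exact hne0 ((angle_eq_abs_oangle_toReal hpq hrq).trans (by rw [← hsum]; simp))
    · right
      rw [← Real.Angle.coe_neg] at hA hB
      refine ⟨hA, ?_⟩
      rw [← hsum, hA, hB, ← Real.Angle.coe_add]
      congr 1
      ring
  have hra' : ∠ a q r = s := ha1.symm
  have hrb' : ∠ b q r = s := by rw [← hb1, hts]
  have hfin : ∡ p q a = ∡ p q b := by
    rcases key a ha rfl hra' hoa with ⟨h1, h2⟩ | ⟨h1, h2⟩ <;>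
      rcases key b hb hts hrb' hob with ⟨h3, h4⟩ | ⟨h3, h4⟩
    · rw [h1, h3]
    · exact absurd (h2.symm.trans h4) h2s
    · exact absurd (h4.symm.trans h2) h2s
    · rw [h1, h3]
  have hab : ∡ a q b = 0 := by
    rw [← oangle_add ha hpq hb, oangle_rev, hfin]
    simp
  have hab' : Module.Oriented.positiveOrientation.oangle (a -ᵥ q) (b -ᵥ q) = 0 := hab
  rw [Orientation.oangle_eq_zero_iff_sameRay, vsub_eq_sub, vsub_eq_sub] at hab'
  exact hab'
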